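/- The function L(s_a) = t_a ln(t_a/s_a) + (1-t_a) ln((1-t_a)/(1-s_a)) - ln(s_a), defined for s_a ∈ (0,1) with fixed t_a ∈ (0,1) (combined binary KL-plus-CE loss with correct label a), is minimized at the unique point s_a* ∈ (0,1) satisfying the first-order condition, and this minimizer satisfies s_a* > t_a; in particular the minimizer lies strictly between t_a and 1. -/

import Mathlib

noncomputable def L (t s : ℝ) : ℝ :=
  t * Real.log (t / s) + (1 - t) * Real.log ((1 - t) / (1 - s)) - Real.log s

lemma hasDerivAt_L (t s : ℝ) (ht0 : 0 < t) (ht1 : t < 1) (hs0 : 0 < s) (hs1 : s < 1) :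
    HasDerivAt (L t) ((2*s - 1 - t)/(s*(1-s))) s := by
  have h1s : (0:ℝ) < 1 - s := by linarith
  have h1t : (0:ℝ) < 1 - t := by linarith
  have hg : HasDerivAt (fun x => t * Real.log t - t * Real.log x + (1 - t) * Real.log (1 - t)
      - (1 - t) * Real.log (1 - x) - Real.log x)
      (0 - t * s⁻¹ - (1-t) * (-1/(1-s)) - s⁻¹) s := by
    have hlog : HasDerivAt Real.log s⁻¹ s := Real.hasDerivAt_log hs0.ne'
    have hlog1 : HasDerivAt (fun x : ℝ => Real.log (1 - x)) (-1/(1-s)) s := by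
      have h : HasDerivAt (fun x : ℝ => 1 - x) (-1) s := by
        simpa using (hasDerivAt_id' s).const_sub (1:ℝ)
      simpa using h.log h1s.ne'
    exact (((((hasDerivAt_const s (t * Real.log t)).sub (hlog.const_mul t)).add_const
      ((1 - t) * Real.log (1 - t))).sub (hlog1.const_mul (1-t))).sub hlog)
  have heq : L t =ᶠ[nhds s] (fun x => t * Real.log t - t * Real.log x
      + (1 - t) * Real.log (1 - t) - (1 - t) * Real.log (1 - x) - Real.log x) := by
    filter_upwards [Ioo_mem_nhds hs0 hs1] with x hx
    have hx1 : (0:ℝ) < 1 - x := by linarith [hx.2]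
    simp only [L]
    rw [Real.log_div ht0.ne' hx.1.ne', Real.log_div h1t.ne' hx1.ne']
    ring
  have := hg.congr_of_eventuallyEq heq
  exact this.congr_deriv (by field_simp; ring)

lemma derivL (t s : ℝ) (ht0 : 0 < t) (ht1 : t < 1) (hs0 : 0 < s) (hs1 : s < 1) :
    deriv (L t) s = (2*s - 1 - t)/(s*(1-s)) :=
  (hasDerivAt_L t s ht0 ht1 hs0 hs1).deriv

theorem binary_loss_min (t : ℝ) (ht : t ∈ Set.Ioo (0:ℝ) 1) :
    ∃! x : ℝ, x ∈ Set.Ioo (0:ℝ) 1 ∧ deriv (L t) x = 0 ∧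
      (∀ s ∈ Set.Ioo (0:ℝ) 1, L t x ≤ L t s) ∧ t < x ∧ x < 1 := by
  obtain ⟨ht0, ht1⟩ := ht
  set x := (1 + t) / 2 with hx
  have hx0 : 0 < x := by positivity
  have hx1 : x < 1 := by simp only [hx]; linarith
  have hxt : t < x := by simp only [hx]; linarith
  refine ⟨x, ⟨⟨hx0, hx1⟩, ?_, ?_, hxt, hx1⟩, ?_⟩
  · rw [derivL t x ht0 ht1 hx0 hx1]
    have : 2 * x - 1 - t = 0 := by simp only [hx]; ring
    rw [this]; simp
  · -- global min
    have hanti : StrictAntiOn (L t) (Set.Ioc 0 x) := by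
      apply strictAntiOn_of_deriv_neg (convex_Ioc 0 x)
      · apply ContinuousOn.mono ?_ (Set.Ioc_subset_Ioo_right hx1 |>.trans
          (Set.Ioo_subset_Ioo_left le_rfl))
        intro y hy
        exact (hasDerivAt_L t y ht0 ht1 hy.1 hy.2).continuousAt.continuousWithinAt
      · intro y hy
        rw [interior_Ioc] at hy
        have hy1 : y < 1 := hy.2.trans hx1
        rw [derivL t y ht0 ht1 hy.1 hy1]
        apply div_neg_of_neg_of_pos
        · have : y < x := hy.2
          simp only [hx] at this; linarith
        · have h1y : (0:ℝ) < 1 - y := by linarith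
          exact mul_pos hy.1 h1y
    have hmono : StrictMonoOn (L t) (Set.Ico x 1) := by
      apply strictMonoOn_of_deriv_pos (convex_Ico x 1)
      · intro y hy
        exact (hasDerivAt_L t y ht0 ht1 (hx0.trans_le hy.1) hy.2).continuousAt.continuousWithinAt
      · intro y hy
        rw [interior_Ico] at hy
        rw [derivL t y ht0 ht1 (hx0.trans hy.1) hy.2]
        apply div_pos
        · have : x < y := hy.1
          simp only [hx] at this; linarith
        · have h1y : (0:ℝ) < 1 - y := by linarith [hy.2]
          exact mul_pos (hx0.trans hy.1) h1y
    intro s hs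
    rcases le_or_gt s x with h | h
    · exact (hanti.le_iff_ge ⟨hx0, le_rfl⟩ ⟨hs.1, h⟩).mpr h
    · exact (hmono.le_iff_le ⟨le_rfl, hx1⟩ ⟨h.le, hs.2⟩).mpr h.le
  · rintro y ⟨⟨hy0, hy1⟩, hdy, -, -, -⟩
    rw [derivL t y ht0 ht1 hy0 hy1, div_eq_zero_iff] at hdy
    rcases hdy with h | h
    · simp only [hx]; linarith
    · exfalso
      have : (0:ℝ) < y * (1 - y) := by nlinarith
      exact this.ne' h
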